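/- arXiv:1908.00196 — 3 statements merged into one kernel-verified Lean document; each statement's English description precedes it below -/
import Mathlib

section
/- Let Δ_n = ∏_{1≤i<j≤n}(x_i − x_j) be the Vandermonde determinant and s_λ the Schur polynomial in n variables. With respect to the apolar (Bombieri) inner product ⟨f,g⟩ = constant term of f̄(∂)g on k[x_1,...,x_n], one has ⟨s_λΔ_n, s_μΔ_n⟩ = (λ+δ_n)! · n! · δ_{λμ}, where δ_n = (n−1, n−2, ..., 0) and (λ+δ_n)! = ∏_j (λ_j + n − j)!. -/
open MvPolynomial

lemma aux_pderiv_pow (n : ℕ) (i : Fin n) (k : ℕ) (β : Fin n →₀ ℕ) (c : ℂ) :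
    (((pderiv i : Derivation ℂ (MvPolynomial (Fin n) ℂ) _).toLinearMap) ^ k) (monomial β c)
      = monomial (β - Finsupp.single i k) (c * (((β i).descFactorial k : ℕ) : ℂ)) := by
  induction k with
  | zero => simp
  | succ k ih =>
    rw [pow_succ', Module.End.mul_apply, ih]
    show pderiv i _ = _
    rw [pderiv_monomial]
    have h1 : (β - Finsupp.single i k) i = β i - k := by
      simp [Finsupp.tsub_apply]
    have h2 : β - Finsupp.single i k - Finsupp.single i 1 = β - Finsupp.single i (k + 1) := by
      ext j
      rcases eq_or_ne j i with rfl | hj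
      · simp [Finsupp.tsub_apply]
        omega
      · simp [Finsupp.tsub_apply, Finsupp.single_apply, Ne.symm hj]
    rw [h1, h2]
    congr 1
    rw [Nat.descFactorial_succ]
    push_cast
    ring

lemma aux_list (n : ℕ) (α β : Fin n →₀ ℕ) (c : ℂ) :
    ∀ (L : List (Fin n)), L.Nodup →
    ((L.map fun i => ((pderiv i : Derivation ℂ (MvPolynomial (Fin n) ℂ) _).toLinearMap) ^ (α i)).prod)
        (monomial β c)
      = monomial (β - (L.map fun i => Finsupp.single i (α i)).sum)
          (c * (((L.map fun i => (β i).descFactorial (α i)).prod : ℕ) : ℂ)) := by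
  intro L
  induction L with
  | nil => simp
  | cons i L ih =>
    intro hnd
    have hi : i ∉ L := (List.nodup_cons.mp hnd).1
    have hL : L.Nodup := (List.nodup_cons.mp hnd).2
    simp only [List.map_cons, List.prod_cons, Module.End.mul_apply, ih hL]
    rw [aux_pderiv_pow]
    have hzero : (((L.map fun j => Finsupp.single j (α j)).sum : Fin n →₀ ℕ)) i = 0 := by
      rw [← Finsupp.applyAddHom_apply, map_list_sum]
      apply List.sum_eq_zero
      intro x hx
      simp only [List.map_map, List.mem_map, Function.comp] at hx
      obtain ⟨j, hj, rfl⟩ := hx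
      have : j ≠ i := fun h => hi (h ▸ hj)
      simp [Finsupp.single_apply, this]
    have h1 : (β - (L.map fun j => Finsupp.single j (α j)).sum) i = β i := by
      rw [Finsupp.tsub_apply, hzero, Nat.sub_zero]
    rw [h1]
    rw [tsub_tsub]
    congr 1
    · rw [List.sum_cons, add_comm]
    · push_cast
      ring

variable (n : ℕ)

/-- The Vandermonde determinant `Δₙ = ∏_{i<j} (xᵢ - xⱼ)`. -/
noncomputable def vandermonde : MvPolynomial (Fin n) ℂ :=
  ∏ p ∈ Finset.univ.filter (fun p : Fin n × Fin n => p.1 < p.2), (X p.1 - X p.2)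

/-- The bialternant `det(xᵢ^{λⱼ+n-j}) = Σ_{σ∈Sₙ} sgn(σ) ∏ⱼ x_{σ(j)}^{λⱼ+n-j}`,
which equals `s_λ Δₙ`. -/
noncomputable def bialternant (l : Fin n → ℕ) : MvPolynomial (Fin n) ℂ :=
  ∑ σ : Equiv.Perm (Fin n),
    ((Equiv.Perm.sign σ : ℤ) : ℂ) • ∏ j : Fin n, X (σ j) ^ (l j + (n - 1 - (j : ℕ)))

/-- The differential operator attached to a monomial exponent `α`: `∏ᵢ ∂ᵢ^{αᵢ}`. -/
noncomputable def diffOpMon (α : Fin n →₀ ℕ) :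
    Module.End ℂ (MvPolynomial (Fin n) ℂ) :=
  ((List.finRange n).map fun i =>
    ((pderiv i : Derivation ℂ (MvPolynomial (Fin n) ℂ) _).toLinearMap) ^ (α i)).prod

/-- The apolar (Bombieri) inner product `⟨f,g⟩` = constant term of `f̄(∂)(g)`. -/
noncomputable def apolar (f g : MvPolynomial (Fin n) ℂ) : ℂ :=
  coeff 0 (∑ α ∈ f.support, (starRingEnd ℂ) (coeff α f) • (diffOpMon n α g))

lemma aux_sum_single (α : Fin n →₀ ℕ) : ∑ i : Fin n, Finsupp.single i (α i) = α := by
  ext j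
  rw [Finsupp.finset_sum_apply]
  simp [Finsupp.single_apply]

lemma aux_coeff_diff (α β : Fin n →₀ ℕ) (c : ℂ) :
    coeff 0 (diffOpMon n α (monomial β c)) =
      if β = α then (∏ i : Fin n, ((α i).factorial : ℂ)) * c else 0 := by
  rw [diffOpMon, aux_list n α β c _ (List.nodup_finRange n)]
  have hsum : ((List.finRange n).map fun i => Finsupp.single i (α i)).sum = α := by
    rw [← Fin.sum_univ_def, aux_sum_single]
  rw [hsum, coeff_monomial]
  by_cases h : β = α
  · subst h
    rw [if_pos (tsub_self β), if_pos rfl]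
    have : ((List.finRange n).map fun i => (β i).descFactorial (β i)).prod
        = ∏ i : Fin n, (β i).factorial := by
      rw [← Fin.prod_univ_def]
      exact Finset.prod_congr rfl fun i _ => Nat.descFactorial_self (β i)
    rw [this]
    push_cast
    ring
  · rw [if_neg h]
    by_cases h2 : β - α = 0
    · rw [if_pos h2]
      have hle : ∀ i, β i ≤ α i := by
        intro i
        have h3 : (β - α) i = 0 := by rw [h2]; rfl
        rw [Finsupp.tsub_apply] at h3
        omega
      have : ∃ i, β i < α i := by
        by_contra hc
        push_neg at hc
        exact h (Finsupp.ext fun i => le_antisymm (hle i) (hc i))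
      obtain ⟨i, hi⟩ := this
      have : ((List.finRange n).map fun j => (β j).descFactorial (α j)).prod = 0 := by
        rw [← Fin.prod_univ_def]
        exact Finset.prod_eq_zero (Finset.mem_univ i)
          ((Nat.descFactorial_eq_zero_iff_lt).mpr hi)
      rw [this]
      simp
    · rw [if_neg h2]

noncomputable def expo (l : Fin n → ℕ) (σ : Equiv.Perm (Fin n)) : Fin n →₀ ℕ :=
  ∑ j : Fin n, Finsupp.single (σ j) (l j + (n - 1 - (j : ℕ)))

lemma expo_apply (l : Fin n → ℕ) (σ : Equiv.Perm (Fin n)) (i : Fin n) :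
    expo n l σ i = l (σ⁻¹ i) + (n - 1 - ((σ⁻¹ i : Fin n) : ℕ)) := by
  rw [expo, Finsupp.finset_sum_apply]
  rw [Finset.sum_eq_single (σ⁻¹ i)]
  · simp [Finsupp.single_apply]
  · intro j _ hj
    have : σ j ≠ i := fun h => hj (by simp [← h])
    simp [Finsupp.single_apply, this]
  · simp

lemma prod_X_pow_eq (g : Fin n → Fin n) (e : Fin n → ℕ) :
    ∏ j : Fin n, (X (g j) : MvPolynomial (Fin n) ℂ) ^ e j
      = monomial (∑ j : Fin n, Finsupp.single (g j) (e j)) 1 := by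
  induction (Finset.univ : Finset (Fin n)) using Finset.induction with
  | empty => simp
  | insert a s h ih =>
    rw [Finset.prod_insert h, Finset.sum_insert h, ih, X_pow_eq_monomial, monomial_mul, one_mul]

lemma bialternant_eq (l : Fin n → ℕ) :
    bialternant n l = ∑ σ : Equiv.Perm (Fin n),
      ((Equiv.Perm.sign σ : ℤ) : ℂ) • monomial (expo n l σ) 1 := by
  unfold bialternant expo
  refine Finset.sum_congr rfl fun σ _ => ?_
  rw [prod_X_pow_eq]

lemma aux_strictAnti (l : Fin n → ℕ) (hl : Antitone l) :
    StrictAnti (fun j : Fin n => l j + (n - 1 - (j : ℕ))) := by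
  intro j j' h
  have h1 : l j' ≤ l j := hl h.le
  have h2 : (j : ℕ) < (j' : ℕ) := h
  have h3 : (j' : ℕ) < n := j'.isLt
  simp only
  omega

lemma expo_inj (l m : Fin n → ℕ) (hl : Antitone l) (hm : Antitone m)
    (σ τ : Equiv.Perm (Fin n)) (h : expo n l σ = expo n m τ) : l = m ∧ σ = τ := by
  set a : Fin n → ℕ := fun j => l j + (n - 1 - (j : ℕ)) with ha
  set b : Fin n → ℕ := fun j => m j + (n - 1 - (j : ℕ)) with hb
  have hsa : StrictAnti a := aux_strictAnti n l hl
  have hsb : StrictAnti b := aux_strictAnti n m hm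
  have key : ∀ j, a j = b ((τ⁻¹ * σ) j) := by
    intro j
    have := DFunLike.congr_fun h (σ j)
    rw [expo_apply, expo_apply] at this
    simpa using this
  set π : Equiv.Perm (Fin n) := τ⁻¹ * σ with hπ
  have hmono : StrictMono (π : Fin n → Fin n) := by
    intro j j' hjj
    have : b (π j') < b (π j) := by
      rw [← key j, ← key j']
      exact hsa hjj
    exact hsb.lt_iff_gt.mp this
  have hid : (π : Fin n → Fin n) = id := by
    haveI : WellFoundedLT (Fin n) := inferInstance
    have h2 : Set.range (π : Fin n → Fin n) = Set.range (id : Fin n → Fin n) := by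
      rw [Set.range_id]
      exact Set.range_eq_univ.mpr π.surjective
    exact (hmono.range_inj strictMono_id).mp h2
  have hπ1 : π = 1 := Equiv.ext fun j => congrFun hid j
  have hστ : σ = τ := by
    have h3 : τ⁻¹ * σ = 1 := hπ.symm.trans hπ1
    exact (inv_mul_eq_one.mp h3).symm
  refine ⟨?_, hστ⟩
  have hab : a = b := by
    funext j
    rw [key j, hπ1]
    rfl
  funext j
  have := congrFun hab j
  simp only [ha, hb] at this
  omega

/-- `⟨s_λΔₙ, s_μΔₙ⟩ = (λ+δₙ)! · n! · δ_{λμ}`, where the Schur polynomials `s_λ, s_μ`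
are characterized by the bialternant formula `s_λ · Δₙ = det(xᵢ^{λⱼ+n-j})`. -/
theorem apolar_schur_vandermonde (l m : Fin n → ℕ) (hl : Antitone l) (hm : Antitone m)
    (sl sm : MvPolynomial (Fin n) ℂ)
    (hsl : sl * vandermonde n = bialternant n l)
    (hsm : sm * vandermonde n = bialternant n m) :
    apolar n (sl * vandermonde n) (sm * vandermonde n) =
      (∏ j : Fin n, ((l j + (n - 1 - (j : ℕ))).factorial : ℂ)) * (n.factorial : ℂ) *
        (if l = m then 1 else 0) := by
  classical
  rw [hsl, hsm]
  set f := bialternant n l with hf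
  -- the action of diffOpMon on the second bialternant
  have hD : ∀ α : Fin n →₀ ℕ, coeff 0 (diffOpMon n α (bialternant n m)) =
      ∑ τ : Equiv.Perm (Fin n), ((Equiv.Perm.sign τ : ℤ) : ℂ) *
        (if expo n m τ = α then (∏ i : Fin n, ((α i).factorial : ℂ)) else 0) := by
    intro α
    rw [bialternant_eq, map_sum, coeff_sum]
    refine Finset.sum_congr rfl fun τ _ => ?_
    rw [LinearMap.map_smul, coeff_smul, smul_eq_mul, aux_coeff_diff]
    by_cases h : expo n m τ = α
    · rw [if_pos h, if_pos h, mul_one]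
    · rw [if_neg h, if_neg h]
  have step1 : apolar n f (bialternant n m) =
      ∑ α ∈ f.support, (starRingEnd ℂ) (coeff α f) * coeff 0 (diffOpMon n α (bialternant n m)) := by
    rw [apolar, coeff_sum]
    exact Finset.sum_congr rfl fun α _ => by rw [coeff_smul, smul_eq_mul]
  rw [step1]
  simp_rw [hD, Finset.mul_sum]
  rw [Finset.sum_comm]
  have step2 : ∀ τ : Equiv.Perm (Fin n),
      (∑ α ∈ f.support, (starRingEnd ℂ) (coeff α f) * (((Equiv.Perm.sign τ : ℤ) : ℂ) *
        (if expo n m τ = α then (∏ i : Fin n, ((α i).factorial : ℂ)) else 0)))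
      = (starRingEnd ℂ) (coeff (expo n m τ) f) * (((Equiv.Perm.sign τ : ℤ) : ℂ) *
          (∏ i : Fin n, (((expo n m τ) i).factorial : ℂ))) := by
    intro τ
    simp_rw [mul_ite, mul_zero]
    rw [Finset.sum_ite_eq]
    by_cases h : expo n m τ ∈ f.support
    · rw [if_pos h]
    · rw [if_neg h]
      rw [MvPolynomial.notMem_support_iff.mp h]
      simp
  simp_rw [step2]
  -- coefficient of the first bialternant at expo m τ
  have hC : ∀ τ : Equiv.Perm (Fin n), coeff (expo n m τ) f =
      ∑ σ : Equiv.Perm (Fin n), ((Equiv.Perm.sign σ : ℤ) : ℂ) *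
        (if expo n l σ = expo n m τ then 1 else 0) := by
    intro τ
    rw [hf, bialternant_eq, coeff_sum]
    refine Finset.sum_congr rfl fun σ _ => ?_
    rw [coeff_smul, smul_eq_mul, coeff_monomial]
  by_cases hlm : l = m
  · subst hlm
    rw [if_pos rfl]
    have hCτ : ∀ τ : Equiv.Perm (Fin n), coeff (expo n l τ) f = ((Equiv.Perm.sign τ : ℤ) : ℂ) := by
      intro τ
      rw [hC τ]
      rw [Finset.sum_eq_single τ]
      · rw [if_pos rfl, mul_one]
      · intro σ _ hστ
        have : expo n l σ ≠ expo n l τ := fun h => hστ (expo_inj n l l hl hl σ τ h).2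
        rw [if_neg this, mul_zero]
      · intro h
        exact absurd (Finset.mem_univ τ) h
    have hfact : ∀ τ : Equiv.Perm (Fin n),
        (∏ i : Fin n, (((expo n l τ) i).factorial : ℂ))
          = ∏ j : Fin n, ((l j + (n - 1 - (j : ℕ))).factorial : ℂ) := by
      intro τ
      rw [Finset.prod_congr rfl (fun i _ => by rw [expo_apply])]
      exact Equiv.prod_comp τ⁻¹ (fun j => ((l j + (n - 1 - (j : ℕ))).factorial : ℂ))
    have hterm : ∀ τ : Equiv.Perm (Fin n),
        (starRingEnd ℂ) (coeff (expo n l τ) f) * (((Equiv.Perm.sign τ : ℤ) : ℂ) *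
          (∏ i : Fin n, (((expo n l τ) i).factorial : ℂ)))
        = ∏ j : Fin n, ((l j + (n - 1 - (j : ℕ))).factorial : ℂ) := by
      intro τ
      rw [hCτ τ, hfact τ, map_intCast, ← mul_assoc]
      have h4 : ((Equiv.Perm.sign τ : ℤ) : ℂ) * ((Equiv.Perm.sign τ : ℤ) : ℂ) = 1 := by
        rw [← Int.cast_mul, ← Units.val_mul, Int.units_mul_self, Units.val_one, Int.cast_one]
      rw [h4, one_mul]
    rw [Finset.sum_congr rfl (fun τ _ => hterm τ), Finset.sum_const, Finset.card_univ,
      Fintype.card_perm, Fintype.card_fin, nsmul_eq_mul]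
    ring
  · rw [if_neg hlm, mul_zero]
    have : ∀ τ : Equiv.Perm (Fin n), coeff (expo n m τ) f = 0 := by
      intro τ
      rw [hC τ]
      apply Finset.sum_eq_zero
      intro σ _
      have : expo n l σ ≠ expo n m τ := fun h => hlm (expo_inj n l m hl hm σ τ h).1
      rw [if_neg this, mul_zero]
    refine Finset.sum_eq_zero fun τ _ => ?_
    rw [this τ]
    simp
end

section
/- For a unitary matrix σ ∈ U(n,k) acting on polynomials, and for the action f·g := f̄(∂_1,...,∂_n)(g) of polynomials on polynomials by conjugated differential operators, equivariance holds: σ(f·g) = σ(f)·σ(g) for all f, g ∈ k[x_1,...,x_n]. -/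
open MvPolynomial

variable (n : ℕ)

/-- The substitution action of a matrix `M` on `ℂ[x₁,…,xₙ]`: `xᵢ ↦ Σⱼ Mᵢⱼ xⱼ`. -/
noncomputable def matAct (M : Matrix (Fin n) (Fin n) ℂ) :
    MvPolynomial (Fin n) ℂ →ₐ[ℂ] MvPolynomial (Fin n) ℂ :=
  aeval fun i => ∑ j : Fin n, C (M i j) * X j

/-- The action `f · g := f̄(∂₁,…,∂ₙ)(g)` of polynomials on polynomials by
conjugated differential operators. -/
noncomputable def cdot (f g : MvPolynomial (Fin n) ℂ) : MvPolynomial (Fin n) ℂ :=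
  ∑ α ∈ f.support, (starRingEnd ℂ) (coeff α f) • (diffOpMon n α g)

lemma pderiv_comm' (i j : Fin n) (f : MvPolynomial (Fin n) ℂ) :
    pderiv i (pderiv j f) = pderiv j (pderiv i f) := by
  induction f using MvPolynomial.induction_on with
  | C a => simp [pderiv_C]
  | add p q hp hq => simp [hp, hq]
  | mul_X p k hp =>
    simp only [pderiv_mul, map_add, hp]
    rcases eq_or_ne k i with rfl | hki <;> rcases eq_or_ne k j with rfl | hkj <;>
      simp [pderiv_X_of_ne, pderiv_mul, *]

lemma list_prod_pow_single {M : Type*} [Monoid M] (p : Fin n → M)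
    (hp : ∀ a b : Fin n, Commute (p a) (p b)) (α : Fin n →₀ ℕ) (i : Fin n) :
    ∀ l : List (Fin n), l.Nodup → i ∈ l →
      (l.map fun j => p j ^ (((α + Finsupp.single i 1 : Fin n →₀ ℕ)) j)).prod
        = (l.map fun j => p j ^ α j).prod * p i := by
  intro l
  induction l with
  | nil => simp
  | cons b t ih =>
    intro hnd hmem
    have hndt := (List.nodup_cons.mp hnd).2
    have hbt := (List.nodup_cons.mp hnd).1
    rcases eq_or_ne b i with rfl | hbi
    · have htail : (t.map fun j => p j ^ (((α + Finsupp.single b 1 : Fin n →₀ ℕ)) j)).prod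
          = (t.map fun j => p j ^ α j).prod := by
        congr 1
        refine List.map_congr_left fun j hj => ?_
        have : j ≠ b := fun h => hbt (h ▸ hj)
        simp [Finsupp.single_apply, this.symm, Ne.symm this]
      have hcomm : Commute (p b) ((t.map fun j => p j ^ α j).prod) := by
        refine Commute.list_prod_right _ _ fun x hx => ?_
        rcases List.mem_map.mp hx with ⟨j, _, rfl⟩
        exact (hp b j).pow_right _
      simp only [List.map_cons, List.prod_cons, htail]
      have : ((α + Finsupp.single b 1 : Fin n →₀ ℕ)) b = α b + 1 := by simp
      rw [this, pow_succ, mul_assoc, mul_assoc, hcomm.eq]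
    · have hit : i ∈ t := by
        rcases List.mem_cons.mp hmem with h | h
        · exact absurd h.symm hbi
        · exact h
      have hhead : ((α + Finsupp.single i 1 : Fin n →₀ ℕ)) b = α b := by
        simp [Finsupp.single_apply, Ne.symm hbi, hbi]
      simp only [List.map_cons, List.prod_cons, hhead, ih hndt hit, mul_assoc]

lemma diffOpMon_add_single (α : Fin n →₀ ℕ) (i : Fin n) :
    diffOpMon n (α + Finsupp.single i 1)
      = diffOpMon n α * (pderiv i : Derivation ℂ (MvPolynomial (Fin n) ℂ) _).toLinearMap := by
  have hcomm : ∀ a b : Fin n,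
      Commute ((pderiv a : Derivation ℂ (MvPolynomial (Fin n) ℂ) _).toLinearMap)
        ((pderiv b : Derivation ℂ (MvPolynomial (Fin n) ℂ) _).toLinearMap) := by
    intro a b
    exact LinearMap.ext fun f => pderiv_comm' n a b f
  exact list_prod_pow_single n _ hcomm α i (List.finRange n)
    (List.nodup_finRange n) (List.mem_finRange i)

lemma cdot_eq_sum_superset (f g : MvPolynomial (Fin n) ℂ) {s : Finset (Fin n →₀ ℕ)}
    (hs : f.support ⊆ s) :
    cdot n f g = ∑ α ∈ s, (starRingEnd ℂ) (coeff α f) • (diffOpMon n α g) := by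
  refine Finset.sum_subset hs fun α _ hα => ?_
  rw [MvPolynomial.notMem_support_iff.mp hα]
  simp

lemma cdot_zero_left (g : MvPolynomial (Fin n) ℂ) : cdot n 0 g = 0 := by
  simp [cdot]

lemma cdot_add_left (f₁ f₂ g : MvPolynomial (Fin n) ℂ) :
    cdot n (f₁ + f₂) g = cdot n f₁ g + cdot n f₂ g := by
  rw [cdot_eq_sum_superset n (f₁ + f₂) g (MvPolynomial.support_add (R := ℂ)),
    cdot_eq_sum_superset n f₁ g (Finset.subset_union_left),
    cdot_eq_sum_superset n f₂ g (Finset.subset_union_right), ← Finset.sum_add_distrib]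
  refine Finset.sum_congr rfl fun α _ => ?_
  simp [coeff_add, map_add, add_smul]

lemma cdot_C_mul (c : ℂ) (f g : MvPolynomial (Fin n) ℂ) :
    cdot n (C c * f) g = (starRingEnd ℂ) c • cdot n f g := by
  have hsub : (C c * f).support ⊆ f.support := by
    rw [← MvPolynomial.smul_eq_C_mul]
    exact MvPolynomial.support_smul
  rw [cdot_eq_sum_superset n (C c * f) g hsub, cdot, Finset.smul_sum]
  refine Finset.sum_congr rfl fun α _ => ?_
  rw [coeff_C_mul, map_mul, smul_smul]

lemma cdot_mul_X (f g : MvPolynomial (Fin n) ℂ) (i : Fin n) :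
    cdot n (f * X i) g = cdot n f (pderiv i g) := by
  rw [cdot, support_mul_X, Finset.sum_map, cdot]
  refine Finset.sum_congr rfl fun α _ => ?_
  simp only [addRightEmbedding_apply]
  rw [coeff_mul_X, diffOpMon_add_single]
  rfl

lemma cdot_add_right (f g₁ g₂ : MvPolynomial (Fin n) ℂ) :
    cdot n f (g₁ + g₂) = cdot n f g₁ + cdot n f g₂ := by
  simp [cdot, map_add, smul_add, Finset.sum_add_distrib]

lemma cdot_smul_right (c : ℂ) (f g : MvPolynomial (Fin n) ℂ) :
    cdot n f (c • g) = c • cdot n f g := by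
  simp only [cdot, map_smul, Finset.smul_sum, smul_comm c]

lemma cdot_C_left (c : ℂ) (g : MvPolynomial (Fin n) ℂ) :
    cdot n (C c) g = (starRingEnd ℂ) c • g := by
  rcases eq_or_ne c 0 with rfl | hc
  · simp [cdot]
  · have : diffOpMon n 0 = 1 := by
      simp [diffOpMon, List.prod_eq_one]
    rw [cdot, show (C c : MvPolynomial (Fin n) ℂ) = monomial 0 c from rfl,
      support_monomial, if_neg hc]
    simp [coeff_monomial, this]

lemma cdot_zero_right (f : MvPolynomial (Fin n) ℂ) : cdot n f 0 = 0 := by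
  simp [cdot]

lemma cdot_sum_right {ι : Type*} (s : Finset ι) (f : MvPolynomial (Fin n) ℂ)
    (g : ι → MvPolynomial (Fin n) ℂ) :
    cdot n f (∑ j ∈ s, g j) = ∑ j ∈ s, cdot n f (g j) := by
  classical
  induction s using Finset.induction_on with
  | empty => simp [cdot_zero_right]
  | insert _ _ hx ih => simp [Finset.sum_insert hx, cdot_add_right, ih]

lemma cdot_sum_left {ι : Type*} (s : Finset ι) (F : ι → MvPolynomial (Fin n) ℂ)
    (g : MvPolynomial (Fin n) ℂ) :
    cdot n (∑ j ∈ s, F j) g = ∑ j ∈ s, cdot n (F j) g := by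
  classical
  induction s using Finset.induction_on with
  | empty => simp [cdot_zero_left]
  | insert _ _ hx ih => simp [Finset.sum_insert hx, cdot_add_left, ih]

lemma matAct_C (U : Matrix (Fin n) (Fin n) ℂ) (c : ℂ) :
    matAct n U (C c) = C c := by
  simp [matAct, algebraMap_eq]

lemma matAct_X (U : Matrix (Fin n) (Fin n) ℂ) (i : Fin n) :
    matAct n U (X i) = ∑ j : Fin n, C (U i j) * X j :=
  aeval_X _ i

lemma pderiv_matAct (U : Matrix (Fin n) (Fin n) ℂ) (g : MvPolynomial (Fin n) ℂ) (j : Fin n) :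
    pderiv j (matAct n U g) = ∑ k : Fin n, U k j • matAct n U (pderiv k g) := by
  induction g using MvPolynomial.induction_on with
  | C a => simp [matAct_C, pderiv_C]
  | add p q hp hq => simp [map_add, hp, hq, Finset.sum_add_distrib, smul_add]
  | mul_X p i hp =>
    have hXd : pderiv j (matAct n U (X i)) = C (U i j) := by
      rw [matAct_X]
      rw [map_sum]
      rw [Finset.sum_eq_single j]
      · rw [pderiv_mul, pderiv_C, pderiv_X_self, zero_mul, mul_one, zero_add]
      · intro b _ hb
        rw [pderiv_mul, pderiv_C, pderiv_X_of_ne hb, zero_mul, mul_zero, add_zero]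
      · intro h
        exact absurd (Finset.mem_univ j) h
    rw [map_mul, pderiv_mul, hp, hXd]
    have hRHS : ∀ k : Fin n, pderiv k (p * X i)
        = pderiv k p * X i + (if k = i then p else 0) := by
      intro k
      rcases eq_or_ne k i with rfl | hk
      · rw [pderiv_mul, pderiv_X_self, mul_one, if_pos rfl]
      · rw [pderiv_mul, pderiv_X_of_ne (Ne.symm hk), mul_zero, if_neg hk, add_zero]
    simp only [hRHS, map_add, map_mul, smul_add, Finset.sum_add_distrib]
    congr 1
    · rw [Finset.sum_mul]
      exact Finset.sum_congr rfl fun k _ => smul_mul_assoc _ _ _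
    · rw [Finset.sum_eq_single i]
      · rw [if_pos rfl, smul_eq_C_mul, mul_comm]
      · intro b _ hb
        simp [if_neg hb]
      · intro h
        exact absurd (Finset.mem_univ i) h

lemma matAct_pderiv (U : Matrix (Fin n) (Fin n) ℂ)
    (hU : U ∈ Matrix.unitaryGroup (Fin n) ℂ) (g : MvPolynomial (Fin n) ℂ) (i : Fin n) :
    matAct n U (pderiv i g)
      = ∑ j : Fin n, (starRingEnd ℂ) (U i j) • pderiv j (matAct n U g) := by
  have h1 : U * star U = 1 := Matrix.mem_unitaryGroup_iff.mp hU
  have hent : ∀ k : Fin n, (∑ j : Fin n, U k j * (starRingEnd ℂ) (U i j))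
      = if k = i then 1 else 0 := by
    intro k
    have := congrArg (fun M => M k i) h1
    simpa [Matrix.mul_apply, Matrix.one_apply, Matrix.star_eq_conjTranspose,
      Matrix.conjTranspose_apply] using this
  calc matAct n U (pderiv i g)
      = ∑ k : Fin n, (if k = i then (1:ℂ) else 0) • matAct n U (pderiv k g) := by
        rw [Finset.sum_eq_single i]
        · rw [if_pos rfl, one_smul]
        · intro b _ hb; rw [if_neg hb, zero_smul]
        · intro h; exact absurd (Finset.mem_univ i) h
    _ = ∑ k : Fin n, (∑ j : Fin n, U k j * (starRingEnd ℂ) (U i j))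
          • matAct n U (pderiv k g) := by
        refine Finset.sum_congr rfl fun k _ => ?_
        rw [hent k]
    _ = ∑ j : Fin n, (starRingEnd ℂ) (U i j) • pderiv j (matAct n U g) := by
        simp only [Finset.sum_smul]
        rw [Finset.sum_comm]
        refine Finset.sum_congr rfl fun j _ => ?_
        rw [pderiv_matAct, Finset.smul_sum]
        refine Finset.sum_congr rfl fun k _ => ?_
        rw [mul_comm, mul_smul]

/-- Equivariance of the `·` action under unitary substitutions:
`σ(f·g) = σ(f)·σ(g)`. -/
theorem unitary_cdot_equivariant (U : Matrix (Fin n) (Fin n) ℂ)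
    (hU : U ∈ Matrix.unitaryGroup (Fin n) ℂ) (f g : MvPolynomial (Fin n) ℂ) :
    matAct n U (cdot n f g) = cdot n (matAct n U f) (matAct n U g) := by
  induction f using MvPolynomial.induction_on generalizing g with
  | C a =>
    rw [cdot_C_left, map_smul, matAct_C, cdot_C_left]
  | add p q hp hq =>
    rw [cdot_add_left, map_add, hp, hq, map_add, cdot_add_left]
  | mul_X p i hp =>
    rw [cdot_mul_X, hp (pderiv i g), matAct_pderiv n U hU, cdot_sum_right]
    have step : ∀ j : Fin n,
        cdot n (matAct n U p) ((starRingEnd ℂ) (U i j) • pderiv j (matAct n U g))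
          = cdot n (C (U i j) * (matAct n U p * X j)) (matAct n U g) := by
      intro j
      rw [cdot_smul_right, cdot_C_mul, cdot_mul_X]
    simp only [step]
    rw [← cdot_sum_left]
    congr 1
    rw [map_mul, matAct_X, Finset.mul_sum]
    refine Finset.sum_congr rfl fun j _ => ?_
    ring
end

section
/- For disjoint I, J ⊆ [n] = {1,...,n}, the sign identity deg([n]\J) + inv(I,J) ≡ inv(I,[n]\J) + deg([n]\(I∪J)) (mod 2) holds, where deg(S) = Σ_{s∈S}(s−1) and inv(A,B) = #{(a,b) ∈ A×B : b < a}. -/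
open Finset

/-- `invPairs A B` counts pairs `(a,b) ∈ A × B` with `b < a`. -/
def invPairs (A B : Finset ℕ) : ℕ := ((A ×ˢ B).filter fun p => p.2 < p.1).card

/-- `degSet S = Σ_{s ∈ S} (s-1)`. -/
def degSet (S : Finset ℕ) : ℕ := ∑ s ∈ S, (s - 1)

lemma invPairs_eq_sum (A B : Finset ℕ) :
    invPairs A B = ∑ a ∈ A, (B.filter (· < a)).card := by
  unfold invPairs
  rw [Finset.card_filter, Finset.sum_product]
  refine Finset.sum_congr rfl fun a _ => ?_
  rw [Finset.card_filter]

lemma invPairs_union_right (A B C : Finset ℕ) (h : Disjoint B C) :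
    invPairs A (B ∪ C) = invPairs A B + invPairs A C := by
  simp only [invPairs_eq_sum, ← Finset.sum_add_distrib]
  refine Finset.sum_congr rfl fun a _ => ?_
  rw [Finset.filter_union, Finset.card_union_of_disjoint]
  exact Finset.disjoint_filter_filter h

lemma invPairs_Icc (n : ℕ) (I : Finset ℕ) (hI : I ⊆ Finset.Icc 1 n) :
    invPairs I (Finset.Icc 1 n) = degSet I := by
  rw [invPairs_eq_sum]
  refine Finset.sum_congr rfl fun a ha => ?_
  have ha' := hI ha
  rw [Finset.mem_Icc] at ha'
  have : (Finset.Icc 1 n).filter (· < a) = Finset.Icc 1 (a - 1) := by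
    ext b
    simp only [Finset.mem_filter, Finset.mem_Icc]
    omega
  rw [this, Nat.card_Icc]; omega

/-- For disjoint `I, J ⊆ [n]`:
`deg([n]∖J) + inv(I,J) ≡ inv(I,[n]∖J) + deg([n]∖(I∪J)) (mod 2)`. -/
theorem hodge_sign_identity (n : ℕ) (I J : Finset ℕ)
    (hI : I ⊆ Finset.Icc 1 n) (hJ : J ⊆ Finset.Icc 1 n) (hdisj : Disjoint I J) :
    degSet (Finset.Icc 1 n \ J) + invPairs I J ≡
      invPairs I (Finset.Icc 1 n \ J) + degSet (Finset.Icc 1 n \ (I ∪ J)) [MOD 2] := by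
  set U := Finset.Icc 1 n
  have hIU : I ⊆ U \ J := Finset.subset_sdiff.mpr ⟨hI, hdisj⟩
  have h1 : degSet (U \ J) = degSet (U \ (I ∪ J)) + degSet I := by
    have : U \ (I ∪ J) = (U \ J) \ I := by
      ext x; simp [Finset.mem_sdiff]; tauto
    rw [this]
    unfold degSet
    exact (Finset.sum_sdiff hIU).symm
  have h2 : invPairs I J + invPairs I (U \ J) = degSet I := by
    rw [← invPairs_union_right _ _ _ (Finset.disjoint_sdiff),
      Finset.union_sdiff_of_subset hJ]
    exact invPairs_Icc n I hI
  have : degSet (U \ J) + invPairs I J =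
      invPairs I (U \ J) + degSet (U \ (I ∪ J)) + 2 * invPairs I J := by omega
  rw [this]
  exact (Nat.modEq_iff_dvd' (by omega)).mpr ⟨invPairs I J, by omega⟩ |>.symm
end
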